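/- Let p₁,…,p_k be distinct primes, n = ∏_{i=1}^k (p_i−1), n_i = ∏_{j<i}(p_j−1), γ(α) = Σ_i α_i n_i for α ∈ ∏_i{0,…,p_i−2}, and let d ≥ 1 and U₁,…,U_k ∈ GL_d(ℤ) be pairwise commuting with U_i^{p_i−1} = I_d for all i. For α write U^{⟨α⟩} = U₁^{−α₁}⋯U_k^{−α_k}. Regard matrices in M_{nd}(ℤ) as n×n arrays of d×d blocks indexed by {0,…,n−1}. Let D_i = U_i ⊗ P̂_i^T − I_{nd}, where P̂_i = I_{p₁−1} ⊗ ⋯ ⊗ I_{p_{i−1}−1} ⊗ P_{p_i−1} ⊗ I_{p_{i+1}−1} ⊗ ⋯ ⊗ I_{p_k−1} and U_i is taken as the innermost (lowest-index) Kronecker factor; thus the block of D_i at (γ(α),γ(β)) equals U_i·[β_i ≡ α_i+1 mod (p_i−1) and β_j = α_j for j ≠ i] − I_d·[α = β]. Let Q ∈ M_{nd}(ℤ) be the block matrix whose block at (γ(α),0) is U^{⟨α⟩} for γ(α) ≠ 0, whose diagonal blocks are I_d, and all other blocks 0. Then: (a) Q is invertible over ℤ; (b) for every i, the first d columns of Q^{−1}D_iQ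 are zero, so Q^{−1}D_iQ = [[0, D̂_i],[0, D̃_i]] with D̂_i ∈ M_{d,(n−1)d}(ℤ) and D̃_i ∈ M_{(n−1)d}(ℤ); (c) for every prime p there exist matrices Ĉ_i^{(p)} ∈ M_{(n−1)d,d}(ℤ_p) and C̃_i^{(p)} ∈ M_{(n−1)d}(ℤ_p), 1 ≤ i ≤ k, such that Σ_{i=1}^k (Ĉ_i^{(p)} D̂_i + C̃_i^{(p)} D̃_i) ∈ GL_{(n−1)d}(ℤ_p). -/

import Mathlib

open Finset Matrix

namespace MsPabzAux

variable {k d : ℕ} {R : Type*} [CommRing R]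

/-- product of powers of pairwise commuting matrices -/
def pprod (U : Fin k → Matrix (Fin d) (Fin d) R)
    (hc : ∀ i j, Commute (U i) (U j)) (e : Fin k → ℕ) : Matrix (Fin d) (Fin d) R :=
  Finset.univ.noncommProd (fun i => U i ^ e i)
    (fun i _ j _ _ => Commute.pow_pow (hc i j) _ _)

variable {U : Fin k → Matrix (Fin d) (Fin d) R} (hc : ∀ i j, Commute (U i) (U j))

lemma pprod_erase (i : Fin k) (e : Fin k → ℕ) :
    pprod U hc e = U i ^ e i * (Finset.univ.erase i).noncommProd (fun j => U j ^ e j)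
      (fun a _ b _ _ => Commute.pow_pow (hc a b) _ _) :=
  (Finset.mul_noncommProd_erase univ (mem_univ i) _
    (fun a _ b _ _ => Commute.pow_pow (hc a b) _ _)).symm

lemma pprod_update (i : Fin k) (e : Fin k → ℕ) (n : ℕ) :
    pprod U hc (Function.update e i n) =
      U i ^ n * (Finset.univ.erase i).noncommProd (fun j => U j ^ e j)
        (fun a _ b _ _ => Commute.pow_pow (hc a b) _ _) := by
  rw [pprod_erase hc i]
  congr 1
  · rw [Function.update_self]
  · exact Finset.noncommProd_congr rfl
      (fun j hj => by rw [Function.update_of_ne (Finset.ne_of_mem_erase hj)]) _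

lemma mul_pprod (i : Fin k) (e : Fin k → ℕ) (n b : ℕ)
    (h : U i ^ n * U i ^ e i = U i ^ b) :
    U i ^ n * pprod U hc e = pprod U hc (Function.update e i b) := by
  rw [pprod_erase hc i e, pprod_update hc i e b, ← mul_assoc, h]

lemma pprod_mul (i : Fin k) (e : Fin k → ℕ) (n b : ℕ)
    (h : U i ^ e i * U i ^ n = U i ^ b) :
    pprod U hc e * U i ^ n = pprod U hc (Function.update e i b) := by
  rw [pprod_erase hc i e, pprod_update hc i e b, mul_assoc]
  have hcomm : Commute (U i ^ n)
      ((Finset.univ.erase i).noncommProd (fun j => U j ^ e j)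
        (fun a _ b _ _ => Commute.pow_pow (hc a b) _ _)) :=
    Finset.noncommProd_commute _ _ _ _ (fun j _ => Commute.pow_pow (hc i j) _ _)
  rw [← hcomm.eq, ← mul_assoc, h]

lemma pprod_mul_pprod (e f g : Fin k → ℕ) (h : ∀ i, e i + f i = g i) :
    pprod U hc e * pprod U hc f = pprod U hc g := by
  unfold pprod
  rw [← Finset.noncommProd_mul_distrib _ _
      (fun a _ b _ _ => Commute.pow_pow (hc a b) _ _)
      (fun a _ b _ _ => Commute.pow_pow (hc a b) _ _)
      (fun a _ b _ _ => Commute.pow_pow (hc a b) _ _)]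
  exact Finset.noncommProd_congr rfl
    (fun i _ => by rw [Pi.mul_apply, ← pow_add, h i]) _

lemma pprod_one (e : Fin k → ℕ) (h : ∀ i, U i ^ e i = 1) : pprod U hc e = 1 := by
  unfold pprod
  exact (Finset.noncommProd_eq_pow_card _ _ _ 1 (fun i _ => h i)).trans (one_pow _)

lemma pprod_step (i : Fin k) (e : Fin k → ℕ) (h0 : e i ≠ 0) :
    pprod U hc (Function.update e i (e i - 1)) * U i = pprod U hc e := by
  have h : U i ^ (Function.update e i (e i - 1) i) * U i ^ 1 = U i ^ (e i) := by
    rw [Function.update_self, ← pow_add]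
    congr 1
    omega
  have := pprod_mul hc i (Function.update e i (e i - 1)) 1 (e i) h
  rw [pow_one] at this
  rw [this, Function.update_idem, Function.update_eq_self]

lemma pprod_map {S : Type*} [CommRing S] (f : R →+* S) (e : Fin k → ℕ) :
    (pprod U hc e).map f =
      pprod (fun i => (U i).map f) (fun i j => (hc i j).map f.mapMatrix) e := by
  show f.mapMatrix (pprod U hc e) = _
  unfold pprod
  exact (Finset.map_noncommProd _ _ _ f.mapMatrix).trans
    (Finset.noncommProd_congr rfl (fun i _ => by rw [map_pow]; rfl) _)


section Mats

variable (m : Fin k → ℕ) (hm : ∀ i, 0 < m i)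

def nxt (i : Fin k) (α : ∀ j, Fin (m j)) : ∀ j, Fin (m j) :=
  Function.update α i ⟨((α i : ℕ) + 1) % m i, Nat.mod_lt _ (hm i)⟩

lemma nxt_iff (i : Fin k) (a b : ∀ j, Fin (m j)) :
    ((∀ j, j ≠ i → b j = a j) ∧ ((a i : ℕ) + 1) % m i = (b i : ℕ)) ↔ b = nxt m hm i a := by
  constructor
  · rintro ⟨h1, h2⟩
    funext j
    by_cases hj : j = i
    · subst hj
      rw [nxt, Function.update_self]
      exact Fin.ext h2.symm
    · rw [nxt, Function.update_of_ne hj]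
      exact h1 j hj
  · rintro rfl
    refine ⟨fun j hj => by rw [nxt, Function.update_of_ne hj], ?_⟩
    rw [nxt, Function.update_self]

def zz : ∀ j, Fin (m j) := fun j => ⟨0, hm j⟩

variable (U) in
def Dmat (i : Fin k) : Matrix ((∀ j, Fin (m j)) × Fin d) ((∀ j, Fin (m j)) × Fin d) R :=
  fun x y => (if y.1 = nxt m hm i x.1 then U i x.2 y.2 else 0) - (if x = y then 1 else 0)

variable (U) in
def Qmat : Matrix ((∀ j, Fin (m j)) × Fin d) ((∀ j, Fin (m j)) × Fin d) R :=
  fun x y => if y.1 = zz m hm then pprod U hc (fun j => m j - (x.1 j : ℕ)) x.2 y.2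
    else (if x = y then 1 else 0)

variable (U) in
def Nmat : Matrix ((∀ j, Fin (m j)) × Fin d) ((∀ j, Fin (m j)) × Fin d) R :=
  fun x y => if y.1 = zz m hm ∧ x.1 ≠ zz m hm then
    pprod U hc (fun j => m j - (x.1 j : ℕ)) x.2 y.2 else 0

variable (ho : ∀ i, U i ^ m i = 1)

include ho in
lemma Uinv_zz : pprod U hc (fun j => m j - ((zz m hm j : ℕ))) = 1 :=
  pprod_one hc _ (fun i => by simpa [zz] using ho i)

include ho in
lemma Qmat_eq : Qmat U hc m hm = 1 + Nmat U hc m hm := by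
  ext x y
  simp only [Qmat, Nmat, Matrix.add_apply]
  by_cases h1 : y.1 = zz m hm
  · by_cases h2 : x.1 = zz m hm
    · have hxy : (x = y) ↔ (x.2 = y.2) :=
        ⟨fun h => by rw [h], fun h => Prod.ext (h2.trans h1.symm) h⟩
      rw [if_pos h1,
        if_neg (show ¬(y.1 = zz m hm ∧ x.1 ≠ zz m hm) from fun hh => hh.2 h2), add_zero,
        h2, Uinv_zz hc m hm ho]
      simp only [Matrix.one_apply]
      by_cases h3 : x.2 = y.2
      · rw [if_pos h3, if_pos (hxy.mpr h3)]
      · rw [if_neg h3, if_neg (fun hh => h3 (hxy.mp hh))]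
    · have hne : ¬ (x = y) := fun hh => h2 (by rw [hh, h1])
      rw [if_pos h1, if_pos (⟨h1, h2⟩ : y.1 = zz m hm ∧ x.1 ≠ zz m hm),
        Matrix.one_apply, if_neg hne, zero_add]
  · rw [if_neg h1, if_neg (show ¬(y.1 = zz m hm ∧ x.1 ≠ zz m hm) from fun hh => h1 hh.1),
      add_zero, Matrix.one_apply]

lemma Nmat_sq : Nmat U hc m hm * Nmat U hc m hm = 0 := by
  ext x y
  rw [Matrix.mul_apply]
  rw [Matrix.zero_apply]
  apply Finset.sum_eq_zero
  intro z _
  by_cases h : z.1 = zz m hm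
  · rw [show Nmat U hc m hm z y = 0 from if_neg (fun hh => hh.2 h), mul_zero]
  · rw [show Nmat U hc m hm x z = 0 from if_neg (fun hh => h hh.1), zero_mul]

include ho in
lemma Qmat_mul_invQ : Qmat U hc m hm * (1 - Nmat U hc m hm) = 1 := by
  rw [Qmat_eq hc m hm ho, mul_sub, mul_one, add_mul, one_mul, Nmat_sq, add_zero,
    add_sub_cancel_right]

include ho in
lemma invQ_mul_Qmat : (1 - Nmat U hc m hm) * Qmat U hc m hm = 1 := by
  rw [Qmat_eq hc m hm ho, sub_mul, one_mul, mul_add, mul_one, Nmat_sq, add_zero,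
    add_sub_cancel_right]

include ho in
lemma Qmat_isUnit : IsUnit (Qmat U hc m hm) :=
  ⟨⟨Qmat U hc m hm, 1 - Nmat U hc m hm, Qmat_mul_invQ hc m hm ho,
    invQ_mul_Qmat hc m hm ho⟩, rfl⟩

end Mats


section Sums

lemma sum_split {M A B : Type*} [AddCommMonoid M] [Fintype A] [DecidableEq A] [Fintype B]
    (z : A) (f : A × B → M) :
    ∑ x : A × B, f x = (∑ b : B, f (z, b)) +
      ∑ x : {a : A // a ≠ z} × B, f (x.1.1, x.2) := by
  rw [Fintype.sum_prod_type, Fintype.sum_prod_type,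
    ← Finset.add_sum_erase _ _ (mem_univ z)]
  congr 1
  rw [Finset.sum_subtype (p := fun a => a ≠ z) (univ.erase z) (fun x => by simp) (fun a => ∑ b, f (a, b))]

lemma sum_collapse₁ {m : Fin k → ℕ} (t : ∀ j, Fin (m j)) (A : Matrix (Fin d) (Fin d) R)
    (a : Fin d) (g : ((∀ j, Fin (m j)) × Fin d) → R) :
    ∑ y : (∀ j, Fin (m j)) × Fin d, (if y.1 = t then A a y.2 else 0) * g y
      = ∑ c, A a c * g (t, c) := by
  rw [Fintype.sum_prod_type]
  have h : ∀ β : ∀ j, Fin (m j), (∑ c : Fin d, (if β = t then A a c else 0) * g (β, c))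
      = if β = t then (∑ c, A a c * g (t, c)) else 0 := by
    intro β
    by_cases hβ : β = t
    · subst hβ; simp
    · simp [hβ]
  simp_rw [h]
  simp

lemma sum_collapse₂ {X : Type*} [Fintype X] [DecidableEq X] (x : X) (g : X → R) :
    ∑ y : X, (if x = y then (1 : R) else 0) * g y = g x := by
  simp [ite_mul]

lemma sum_one_mul (a : Fin d) (g : Fin d → R) :
    ∑ c, (1 : Matrix (Fin d) (Fin d) R) a c * g c = g a := by
  simp [Matrix.one_apply, ite_mul]

lemma sum_mul_sum_assoc (A B : Matrix (Fin d) (Fin d) R) (a : Fin d) (g : Fin d → R) :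
    ∑ c, A a c * ∑ c', B c c' * g c' = ∑ c', (A * B) a c' * g c' := by
  simp_rw [Finset.mul_sum, Matrix.mul_apply, Finset.sum_mul]
  rw [Finset.sum_comm]
  exact Finset.sum_congr rfl fun c _ => Finset.sum_congr rfl fun c' _ => (mul_assoc _ _ _).symm

end Sums

section Mats2

variable {U : Fin k → Matrix (Fin d) (Fin d) R} (hc : ∀ i j, Commute (U i) (U j))
variable (m : Fin k → ℕ) (hm : ∀ i, 0 < m i) (ho : ∀ i, U i ^ m i = 1)

include ho in
lemma U_mul_Uinv_nxt (i : Fin k) (α : ∀ j, Fin (m j)) :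
    U i * pprod U hc (fun j => m j - ((nxt m hm i α j : ℕ))) =
      pprod U hc (fun j => m j - ((α j : ℕ))) := by
  have hupd : Function.update (fun j => m j - ((nxt m hm i α j : ℕ))) i (m i - (α i : ℕ))
      = fun j => m j - ((α j : ℕ)) := by
    funext j
    by_cases hj : j = i
    · subst hj; rw [Function.update_self]
    · rw [Function.update_of_ne hj, nxt, Function.update_of_ne hj]
  have hval : ((nxt m hm i α i : ℕ)) = ((α i : ℕ) + 1) % m i := by
    rw [nxt, Function.update_self]
  have hexp : U i ^ 1 * U i ^ (m i - ((nxt m hm i α i : ℕ))) = U i ^ (m i - (α i : ℕ)) := by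
    rw [hval]
    have hA : (α i : ℕ) < m i := (α i).isLt
    rcases Nat.lt_or_ge ((α i : ℕ) + 1) (m i) with h | h
    · rw [Nat.mod_eq_of_lt h, ← pow_add]
      congr 1
      omega
    · have h1 : (α i : ℕ) + 1 = m i := by omega
      have h2 : m i - (α i : ℕ) = 1 := by omega
      rw [h1, Nat.mod_self, Nat.sub_zero, ho i, mul_one, h2]
  calc U i * pprod U hc (fun j => m j - ((nxt m hm i α j : ℕ)))
      = U i ^ 1 * pprod U hc (fun j => m j - ((nxt m hm i α j : ℕ))) := by rw [pow_one]
    _ = pprod U hc (Function.update (fun j => m j - ((nxt m hm i α j : ℕ))) i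
          (m i - (α i : ℕ))) := mul_pprod hc i _ 1 _ hexp
    _ = _ := by rw [hupd]

include ho in
lemma DQ_col (i : Fin k) (x : (∀ j, Fin (m j)) × Fin d) (b : Fin d) :
    (Dmat U m hm i * Qmat U hc m hm) x (zz m hm, b) = 0 := by
  rw [Matrix.mul_apply]
  have hQ : ∀ y : (∀ j, Fin (m j)) × Fin d,
      Qmat U hc m hm y (zz m hm, b) = pprod U hc (fun j => m j - (y.1 j : ℕ)) y.2 b :=
    fun y => if_pos rfl
  simp only [Dmat, hQ, sub_mul]
  rw [Finset.sum_sub_distrib, sum_collapse₁, sum_collapse₂]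
  have h2 : ∑ c, U i x.2 c * pprod U hc (fun j => m j - ((nxt m hm i x.1 j : ℕ))) c b
      = (U i * pprod U hc (fun j => m j - ((nxt m hm i x.1 j : ℕ)))) x.2 b :=
    (Matrix.mul_apply).symm
  rw [h2, U_mul_Uinv_nxt hc m hm ho, sub_self]

include ho in
lemma kernel_struct (u : ((∀ j, Fin (m j)) × Fin d) → R)
    (hrel : ∀ i x, ∑ y, Dmat U m hm i x y * u y = 0) :
    ∀ x, u x = ∑ c, pprod U hc (fun j => m j - (x.1 j : ℕ)) x.2 c * u (zz m hm, c) := by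
  have hrel' : ∀ (i : Fin k) (α : ∀ j, Fin (m j)) (a : Fin d),
      u (α, a) = ∑ c, U i a c * u (nxt m hm i α, c) := by
    intro i α a
    have h := hrel i (α, a)
    simp only [Dmat, sub_mul] at h
    rw [Finset.sum_sub_distrib, sum_collapse₁, sum_collapse₂] at h
    exact (sub_eq_zero.mp h).symm
  have main : ∀ (n : ℕ) (α : ∀ j, Fin (m j)), (∑ j, (α j : ℕ)) = n → ∀ a,
      u (zz m hm, a) = ∑ c, pprod U hc (fun j => (α j : ℕ)) a c * u (α, c) := by
    intro n
    induction n using Nat.strong_induction_on with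
    | _ n ih =>
      intro α hα a
      by_cases hz : α = zz m hm
      · subst hz
        have h1 : pprod U hc (fun j => ((zz m hm j : ℕ))) = 1 :=
          pprod_one hc _ (fun i => by simp [zz])
        rw [h1, sum_one_mul]
      · have hex : ∃ i, (α i : ℕ) ≠ 0 := by
          by_contra h
          push_neg at h
          exact hz (funext fun j => Fin.ext (by simpa [zz] using h j))
        obtain ⟨i, hi⟩ := hex
        have hlt : (α i : ℕ) - 1 < m i := by have := (α i).isLt; omega
        set α' := Function.update α i (⟨(α i : ℕ) - 1, hlt⟩ : Fin (m i)) with hα'def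
        have hα'i : (α' i : ℕ) = (α i : ℕ) - 1 := by
          rw [hα'def, Function.update_self]
        have hα'j : ∀ j, j ≠ i → α' j = α j := fun j hj => by
          rw [hα'def, Function.update_of_ne hj]
        have hnxt : nxt m hm i α' = α := by
          funext j
          by_cases hj : j = i
          · rw [hj, nxt, Function.update_self]
            apply Fin.ext
            show ((α' i : ℕ) + 1) % m i = (α i : ℕ)
            rw [hα'i, Nat.sub_add_cancel (Nat.one_le_iff_ne_zero.mpr hi),
              Nat.mod_eq_of_lt (α i).isLt]
          · rw [nxt, Function.update_of_ne hj, hα'j j hj]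
        have hw : (∑ j, (α' j : ℕ)) < n := by
          have h1 : ∑ j, (α' j : ℕ) = (∑ j ∈ univ.erase i, (α' j : ℕ)) + (α' i : ℕ) :=
            (Finset.sum_erase_add _ _ (mem_univ i)).symm
          have h2 : ∑ j, (α j : ℕ) = (∑ j ∈ univ.erase i, (α j : ℕ)) + (α i : ℕ) :=
            (Finset.sum_erase_add _ _ (mem_univ i)).symm
          have h3 : (∑ j ∈ univ.erase i, (α' j : ℕ)) = ∑ j ∈ univ.erase i, (α j : ℕ) :=
            Finset.sum_congr rfl fun j hj => by rw [hα'j j (Finset.ne_of_mem_erase hj)]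
          omega
        have ih' := ih _ hw α' rfl a
        rw [ih']
        have hstep : ∀ c, u (α', c) = ∑ c', U i c c' * u (α, c') := fun c => by
          rw [hrel' i α' c, hnxt]
        have hpp : pprod U hc (fun j => (α' j : ℕ)) * U i
            = pprod U hc (fun j => (α j : ℕ)) := by
          have he : (fun j => (α' j : ℕ))
              = Function.update (fun j => (α j : ℕ)) i ((α i : ℕ) - 1) := by
            funext j
            by_cases hj : j = i
            · subst hj; rw [Function.update_self, hα'i]
            · rw [Function.update_of_ne hj, hα'j j hj]
          rw [he]
          exact pprod_step hc i _ hi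
        calc ∑ c, pprod U hc (fun j => (α' j : ℕ)) a c * u (α', c)
            = ∑ c, pprod U hc (fun j => (α' j : ℕ)) a c * ∑ c', U i c c' * u (α, c') :=
              Finset.sum_congr rfl fun c _ => by rw [hstep c]
          _ = ∑ c', (pprod U hc (fun j => (α' j : ℕ)) * U i) a c' * u (α, c') :=
              sum_mul_sum_assoc _ _ _ _
          _ = _ := by rw [hpp]
  intro x
  obtain ⟨α, a⟩ := x
  have h0 : ∀ c, u (zz m hm, c)
      = ∑ c', pprod U hc (fun j => (α j : ℕ)) c c' * u (α, c') := main _ α rfl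
  calc u (α, a) = ∑ c', (1 : Matrix (Fin d) (Fin d) R) a c' * u (α, c') :=
        (sum_one_mul a (fun c => u (α, c))).symm
    _ = ∑ c', (pprod U hc (fun j => m j - (α j : ℕ)) * pprod U hc (fun j => (α j : ℕ))) a c'
          * u (α, c') := by
        rw [pprod_mul_pprod hc _ _ m (fun j => by have := (α j).isLt; omega),
          pprod_one hc _ ho]
    _ = ∑ c, pprod U hc (fun j => m j - (α j : ℕ)) a c * u (zz m hm, c) := by
        rw [← sum_mul_sum_assoc]
        exact Finset.sum_congr rfl fun c _ => by rw [← h0 c]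
    _ = _ := rfl

variable {S : Type*} [CommRing S]

lemma Dmat_map (f : R →+* S) (i : Fin k) :
    (Dmat U m hm i).map f = Dmat (fun j => (U j).map f) m hm i := by
  ext x y
  simp [Dmat, Matrix.map_apply, apply_ite f]

lemma Qmat_map (f : R →+* S) :
    (Qmat U hc m hm).map f
      = Qmat (fun j => (U j).map f) (fun i j => by
          simpa [RingHom.mapMatrix_apply] using (hc i j).map f.mapMatrix) m hm := by
  ext x y
  simp only [Qmat, Matrix.map_apply, apply_ite f, _root_.map_one, _root_.map_zero]
  congr 1
  rw [show f (pprod U hc (fun j => m j - (x.1 j : ℕ)) x.2 y.2)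
      = ((pprod U hc (fun j => m j - (x.1 j : ℕ))).map f) x.2 y.2 from rfl,
    pprod_map]

end Mats2


section Mats3

variable {U : Fin k → Matrix (Fin d) (Fin d) R} (hc : ∀ i j, Commute (U i) (U j))
variable (m : Fin k → ℕ) (hm : ∀ i, 0 < m i) (ho : ∀ i, U i ^ m i = 1)

lemma Qmat_mulVec_eq (u : ((∀ j, Fin (m j)) × Fin d) → R)
    (hk : ∀ x, u x = ∑ c, pprod U hc (fun j => m j - (x.1 j : ℕ)) x.2 c * u (zz m hm, c)) :
    Qmat U hc m hm *ᵥ (fun y => if y.1 = zz m hm then u (zz m hm, y.2) else 0) = u := by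
  funext x
  show ∑ y : (∀ j, Fin (m j)) × Fin d, Qmat U hc m hm x y *
      (if y.1 = zz m hm then u (zz m hm, y.2) else 0) = u x
  rw [sum_split (zz m hm) (fun y : (∀ j, Fin (m j)) × Fin d =>
    Qmat U hc m hm x y * (if y.1 = zz m hm then u (zz m hm, y.2) else 0))]
  have e1 : ∀ y' : {a : (∀ j, Fin (m j)) // a ≠ zz m hm} × Fin d,
      Qmat U hc m hm x (y'.1.1, y'.2) *
        (if ((y'.1.1, y'.2) : (∀ j, Fin (m j)) × Fin d).1 = zz m hm
          then u (zz m hm, ((y'.1.1, y'.2) : (∀ j, Fin (m j)) × Fin d).2) else 0) = 0 := by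
    intro y'
    rw [if_neg y'.1.2, mul_zero]
  rw [Finset.sum_congr rfl (fun y' _ => e1 y'), Finset.sum_const_zero, add_zero]
  have e0 : ∀ b : Fin d, Qmat U hc m hm x (zz m hm, b) *
      (if ((zz m hm, b) : (∀ j, Fin (m j)) × Fin d).1 = zz m hm
        then u (zz m hm, ((zz m hm, b) : (∀ j, Fin (m j)) × Fin d).2) else 0)
      = pprod U hc (fun j => m j - (x.1 j : ℕ)) x.2 b * u (zz m hm, b) := by
    intro b
    rw [if_pos rfl]
    congr 1
    exact if_pos rfl
  rw [Finset.sum_congr rfl (fun b _ => e0 b)]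
  exact (hk x).symm

include ho in
lemma no_common_kernel (w : ((∀ j, Fin (m j)) × Fin d) → R)
    (h0 : ∀ b, w (zz m hm, b) = 0)
    (hker : ∀ i, Dmat U m hm i *ᵥ (Qmat U hc m hm *ᵥ w) = 0) : w = 0 := by
  have hk := kernel_struct hc m hm ho (Qmat U hc m hm *ᵥ w) (fun i x => congrFun (hker i) x)
  have hq0 := Qmat_mulVec_eq hc m hm _ hk
  have h1 : (1 - Nmat U hc m hm) * Qmat U hc m hm = 1 := invQ_mul_Qmat hc m hm ho
  have hcancel : (fun y : (∀ j, Fin (m j)) × Fin d =>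
      if y.1 = zz m hm then (Qmat U hc m hm *ᵥ w) (zz m hm, y.2) else 0) = w := by
    calc (fun y : (∀ j, Fin (m j)) × Fin d =>
        if y.1 = zz m hm then (Qmat U hc m hm *ᵥ w) (zz m hm, y.2) else 0)
        = (1 : Matrix ((∀ j, Fin (m j)) × Fin d) ((∀ j, Fin (m j)) × Fin d) R) *ᵥ
            (fun y => if y.1 = zz m hm then (Qmat U hc m hm *ᵥ w) (zz m hm, y.2) else 0) :=
          (Matrix.one_mulVec _).symm
      _ = (1 - Nmat U hc m hm) *ᵥ (Qmat U hc m hm *ᵥ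
            (fun y => if y.1 = zz m hm then (Qmat U hc m hm *ᵥ w) (zz m hm, y.2) else 0)) := by
          rw [Matrix.mulVec_mulVec, h1]
      _ = (1 - Nmat U hc m hm) *ᵥ (Qmat U hc m hm *ᵥ w) := by rw [hq0]
      _ = w := by rw [Matrix.mulVec_mulVec, h1, Matrix.one_mulVec]
  funext y
  rcases y with ⟨β, c⟩
  by_cases hβ : β = zz m hm
  · subst hβ
    exact h0 c
  · rw [← hcancel]
    show (if (β = zz m hm) then _ else 0) = _
    rw [if_neg hβ]
    rfl

end Mats3

end MsPabzAux
/-- Lemma `ms_pabz`.  Block indices `γ(α)` are realized by the dependent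
product type `ι = Π i, Fin (p_i − 1)`, full indices by `ι × Fin d` (with `Fin d` innermost). -/
theorem ms_pabz (k d : ℕ) (hd : 1 ≤ d)
    (P : Fin k → ℕ) (hP : ∀ i, (P i).Prime) (hPinj : Function.Injective P)
    (U : Fin k → Matrix (Fin d) (Fin d) ℤ)
    (hUunit : ∀ i, IsUnit (U i))
    (hUcomm : ∀ i j, Commute (U i) (U j))
    (hUord : ∀ i, U i ^ (P i - 1) = 1) :
    let ια := (i : Fin k) → Fin (P i - 1)
    let ι := ια × Fin d
    let zα : ια := fun i => ⟨0, by have := (hP i).two_le; omega⟩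
    -- U^{⟨α⟩} = U₁^{−α₁}⋯U_k^{−α_k}  (inverses realized via U_i^{p_i−1} = 1)
    let Uinv : ια → Matrix (Fin d) (Fin d) ℤ := fun α =>
      Finset.univ.noncommProd (fun i => U i ^ (P i - 1 - (α i : ℕ)))
        (fun i _ j _ _ => Commute.pow_pow (hUcomm i j) _ _)
    -- D_i = U_i ⊗ P̂_iᵀ − I
    let D : Fin k → Matrix ι ι ℤ := fun i => fun x y =>
      (if (∀ j, j ≠ i → y.1 j = x.1 j) ∧ ((x.1 i : ℕ) + 1) % (P i - 1) = (y.1 i : ℕ)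
        then U i x.2 y.2 else 0) -
      (if x = y then 1 else 0)
    -- Q: blocks U^{⟨α⟩} in the 0-th column of blocks, I_d on the diagonal, 0 elsewhere
    let Q : Matrix ι ι ℤ := fun x y =>
      if y.1 = zα then Uinv x.1 x.2 y.2 else (if x = y then 1 else 0)
    -- (a) Q is invertible over ℤ
    IsUnit Q ∧
    -- (b) the first d columns of Q⁻¹D_iQ vanish
    (∀ (i : Fin k) (x : ι) (b : Fin d), (Q⁻¹ * D i * Q) x (zα, b) = 0) ∧
    -- (c) for every prime p there are C-matrices over ℤ_p making Σ Ĉ_iD̂_i + C̃_iD̃_i invertible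
    (∀ (p : ℕ) [Fact p.Prime],
      let ι' := {α : ια // α ≠ zα} × Fin d
      let Dhat : Fin k → Matrix (Fin d) ι' ℤ_[p] := fun i =>
        ((Q⁻¹ * D i * Q).map (Int.castRingHom ℤ_[p])).submatrix
          (fun b : Fin d => (zα, b)) (fun x : ι' => (x.1.1, x.2))
      let Dtil : Fin k → Matrix ι' ι' ℤ_[p] := fun i =>
        ((Q⁻¹ * D i * Q).map (Int.castRingHom ℤ_[p])).submatrix
          (fun x : ι' => (x.1.1, x.2)) (fun x : ι' => (x.1.1, x.2))
      ∃ (Chat : Fin k → Matrix ι' (Fin d) ℤ_[p]) (Ctil : Fin k → Matrix ι' ι' ℤ_[p]),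
        IsUnit (∑ i : Fin k, (Chat i * Dhat i + Ctil i * Dtil i))) := by
  intro ια ι zα Uinv D Q
  set m : Fin k → ℕ := fun i => P i - 1 with hmdef
  have hm : ∀ i, 0 < m i := fun i => by
    show 0 < P i - 1
    have := (hP i).two_le
    omega
  have ho : ∀ i, U i ^ m i = 1 := hUord
  have hQ : Q = MsPabzAux.Qmat U hUcomm m hm := rfl
  have hzα : zα = MsPabzAux.zz m hm := rfl
  have hD : ∀ i, D i = MsPabzAux.Dmat U m hm i := by
    intro i
    funext x y
    show (if (∀ j, j ≠ i → y.1 j = x.1 j) ∧ ((x.1 i : ℕ) + 1) % m i = (y.1 i : ℕ)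
        then U i x.2 y.2 else 0) - (if x = y then 1 else 0)
      = (if y.1 = MsPabzAux.nxt m hm i x.1 then U i x.2 y.2 else 0) - (if x = y then 1 else 0)
    rw [if_congr (MsPabzAux.nxt_iff m hm i x.1 y.1) rfl rfl]
  have ha : IsUnit Q := by
    rw [hQ]
    exact MsPabzAux.Qmat_isUnit hUcomm m hm ho
  refine ⟨ha, ?_, ?_⟩
  · -- (b)
    intro i x b
    have hcol : ∀ z : ι, (D i * Q) z (zα, b) = 0 := by
      intro z
      rw [hD i, hQ, hzα]
      exact MsPabzAux.DQ_col hUcomm m hm ho i z b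
    rw [mul_assoc, Matrix.mul_apply]
    exact Finset.sum_eq_zero fun z _ => by rw [hcol z, mul_zero]
  · -- (c)
    intro p hp
    intro ι' Dhat Dtil
    classical
    set φ : ℤ →+* ZMod p := Int.castRingHom (ZMod p) with hφ
    set UF : Fin k → Matrix (Fin d) (Fin d) (ZMod p) := fun i => (U i).map φ with hUF
    have hcF : ∀ i j, Commute (UF i) (UF j) := fun i j => by
      simpa [RingHom.mapMatrix_apply] using (hUcomm i j).map φ.mapMatrix
    have hoF : ∀ i, UF i ^ m i = 1 := fun i => by
      have h := congrArg (φ.mapMatrix) (ho i)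
      simpa [map_pow, RingHom.mapMatrix_apply] using h
    have hdet : IsUnit Q.det := (Matrix.isUnit_iff_isUnit_det Q).mp ha
    have hZ : ∀ i, Q * (Q⁻¹ * D i * Q) = D i * Q := by
      intro i
      rw [← mul_assoc, ← mul_assoc, Matrix.mul_nonsing_inv Q hdet, one_mul]
    have hQFeq : Q.map φ = MsPabzAux.Qmat UF hcF m hm := by
      rw [hQ]
      exact MsPabzAux.Qmat_map hUcomm m hm φ
    have hDFeq : ∀ i, (D i).map φ = MsPabzAux.Dmat UF m hm i := fun i => by
      rw [hD i]
      exact MsPabzAux.Dmat_map m hm φ i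
    have hZF : ∀ i, (Q.map φ) * ((Q⁻¹ * D i * Q).map φ)
        = MsPabzAux.Dmat UF m hm i * (Q.map φ) := by
      intro i
      rw [← Matrix.map_mul, hZ i, Matrix.map_mul, hDFeq i]
    -- the stacked matrix over ZMod p
    set S : Matrix (Fin k × ι) ι' (ZMod p) :=
      fun r y => ((Q⁻¹ * D r.1 * Q).map φ) r.2 (y.1.1, y.2) with hS
    have hSinj : ∀ v : ι' → ZMod p, S *ᵥ v = 0 → v = 0 := by
      intro v hv
      set w : ι → ZMod p := fun y => if h : y.1 = zα then 0 else v (⟨y.1, h⟩, y.2) with hw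
      have h2 : ∀ y' : ι', w (y'.1.1, y'.2) = v y' := by
        rintro ⟨⟨β, hβ⟩, c⟩
        show (if h : β = zα then 0 else v (⟨β, h⟩, c)) = v (⟨β, hβ⟩, c)
        rw [dif_neg hβ]
      have hMFw : ∀ i, ((Q⁻¹ * D i * Q).map φ) *ᵥ w = 0 := by
        intro i
        funext x
        show ∑ y : ι, ((Q⁻¹ * D i * Q).map φ) x y * w y = 0
        rw [MsPabzAux.sum_split zα (fun y : ι => ((Q⁻¹ * D i * Q).map φ) x y * w y)]
        have h1 : ∀ b : Fin d, w ((zα, b) : ι) = 0 := fun b => dif_pos rfl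
        have h3 : ∀ b : Fin d, ((Q⁻¹ * D i * Q).map φ) x ((zα, b) : ι) * w ((zα, b) : ι) = 0 :=
          fun b => by rw [h1 b, mul_zero]
        rw [Finset.sum_congr rfl (fun b _ => h3 b), Finset.sum_const_zero, zero_add]
        have h4 : ∀ y' : ι', ((Q⁻¹ * D i * Q).map φ) x (y'.1.1, y'.2) * w (y'.1.1, y'.2)
            = S (i, x) y' * v y' := fun y' => by rw [h2 y']
        rw [Finset.sum_congr rfl (fun y' _ => h4 y')]
        exact congrFun hv (i, x)
      have hker : ∀ i, MsPabzAux.Dmat UF m hm i *ᵥ (MsPabzAux.Qmat UF hcF m hm *ᵥ w) = 0 := by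
        intro i
        rw [← hQFeq, Matrix.mulVec_mulVec, ← hZF i, ← Matrix.mulVec_mulVec, hMFw i,
          Matrix.mulVec_zero]
      have hw0 : w = 0 := MsPabzAux.no_common_kernel hcF m hm hoF w (fun b => dif_pos rfl) hker
      funext y'
      rw [← h2 y', hw0]
      rfl
    -- left inverse over the field ZMod p
    obtain ⟨g, hg⟩ := LinearMap.exists_leftInverse_of_injective (Matrix.mulVecLin S)
      (Matrix.ker_mulVecLin_eq_bot_iff.mpr hSinj)
    set T : Matrix ι' (Fin k × ι) (ZMod p) := LinearMap.toMatrix' g with hT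
    have hTS : T * S = 1 := by
      have h1 : T * S = LinearMap.toMatrix' (g ∘ₗ Matrix.mulVecLin S) := by
        rw [LinearMap.toMatrix'_comp, ← Matrix.toLin'_apply', LinearMap.toMatrix'_toLin']
      rw [h1, hg, LinearMap.toMatrix'_id]
    -- lift T to ℤ_[p]
    set Chat : Fin k → Matrix ι' (Fin d) ℤ_[p] :=
      fun i => Matrix.of (fun x b => (((T x (i, ((zα, b) : ι))).val : ℕ) : ℤ_[p])) with hChat
    set Ctil : Fin k → Matrix ι' ι' ℤ_[p] :=
      fun i => Matrix.of (fun x y => (((T x (i, ((y.1.1, y.2) : ι))).val : ℕ) : ℤ_[p])) with hCtil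
    refine ⟨Chat, Ctil, ?_⟩
    have htoZ : ∀ a : ZMod p, PadicInt.toZMod (((a.val : ℕ) : ℤ_[p])) = a := fun a => by
      rw [map_natCast]
      exact ZMod.natCast_rightInverse a
    -- image of the candidate matrix under toZMod is 1
    have hmap1 : (∑ i : Fin k, (Chat i * Dhat i + Ctil i * Dtil i)).map
        (PadicInt.toZMod : ℤ_[p] →+* ZMod p) = 1 := by
      have hsum : (∑ i : Fin k, (Chat i * Dhat i + Ctil i * Dtil i)).map
          (PadicInt.toZMod : ℤ_[p] →+* ZMod p)
          = ∑ i : Fin k, ((Chat i).map PadicInt.toZMod * (Dhat i).map PadicInt.toZMod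
            + (Ctil i).map PadicInt.toZMod * (Dtil i).map PadicInt.toZMod) := by
        ext x y
        simp [Matrix.map_apply, Matrix.sum_apply, Matrix.add_apply, Matrix.mul_apply,
          map_sum, Finset.mul_sum]
      rw [hsum]
      have hTSapp : ∑ i : Fin k, ((Chat i).map PadicInt.toZMod * (Dhat i).map PadicInt.toZMod
          + (Ctil i).map PadicInt.toZMod * (Dtil i).map PadicInt.toZMod) = T * S := by
        ext x y
        rw [Matrix.sum_apply]
        conv_rhs => rw [Matrix.mul_apply, Fintype.sum_prod_type]
        refine Finset.sum_congr rfl fun i _ => ?_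
        rw [Matrix.add_apply, Matrix.mul_apply, Matrix.mul_apply,
          MsPabzAux.sum_split zα (fun z : ι => T x (i, z) * S (i, z) y)]
        congr 1
        · refine Finset.sum_congr rfl fun b _ => ?_
          rw [Matrix.map_apply, Matrix.map_apply]
          congr 1
          · exact htoZ _
          · exact map_intCast PadicInt.toZMod _
        · refine Finset.sum_congr rfl fun y' _ => ?_
          rw [Matrix.map_apply, Matrix.map_apply]
          congr 1
          · exact htoZ _
          · exact map_intCast PadicInt.toZMod _
      rw [hTSapp, hTS]
    have hdet1 : PadicInt.toZMod ((∑ i : Fin k, (Chat i * Dhat i + Ctil i * Dtil i)).det) = 1 := by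
      rw [RingHom.map_det, RingHom.mapMatrix_apply, hmap1, Matrix.det_one]
    apply (Matrix.isUnit_iff_isUnit_det _).mpr
    by_contra hcon
    have hmem : _ ∈ IsLocalRing.maximalIdeal ℤ_[p] := (IsLocalRing.mem_maximalIdeal _).mpr hcon
    rw [← PadicInt.ker_toZMod, RingHom.mem_ker] at hmem
    rw [hmem] at hdet1
    exact zero_ne_one hdet1
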